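/- If a sequence a : ℕ → ℤ has generating function ∑ a(n)Z^n = P(Z)/((1-Z^{n_1})⋯(1-Z^{n_k})) with P a polynomial with integer coefficients and P(1) ≠ 0, then a(n) is eventually a quasi-polynomial of degree exactly k-1, i.e., there exist a period N and polynomials q_0,...,q_{N-1} of degree k-1 such that a(n) = q_{n mod N}(n) for all sufficiently large n. -/

import Mathlib

open Filter PowerSeries

open Polynomial Finset in
private lemma qp_coeff_one_sub_pow_mul (N : ℕ) (F : PowerSeries ℤ) (n : ℕ) :
    PowerSeries.coeff n ((1 - (PowerSeries.X : PowerSeries ℤ) ^ N) * F)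
      = PowerSeries.coeff n F - (if N ≤ n then PowerSeries.coeff (n - N) F else 0) := by
  rw [sub_mul, one_mul, map_sub, PowerSeries.coeff_X_pow_mul']

open Polynomial Finset in
private lemma qp_step (N : ℕ) (hN : 0 < N) (s : ℕ) :
    (1 - (PowerSeries.X : PowerSeries ℤ) ^ N) *
      PowerSeries.mk (fun n => if N ∣ n then ((n / N + (s + 1)).choose (s + 1) : ℤ) else 0)
    = PowerSeries.mk (fun n => if N ∣ n then ((n / N + s).choose s : ℤ) else 0) := by
  ext n
  rw [qp_coeff_one_sub_pow_mul]
  simp only [PowerSeries.coeff_mk]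
  by_cases hn : N ≤ n
  · have hiff : N ∣ n - N ↔ N ∣ n := by
      constructor
      · intro h
        have := Nat.sub_add_cancel hn
        exact this ▸ dvd_add h dvd_rfl
      · intro h; exact Nat.dvd_sub h dvd_rfl
    by_cases hd : N ∣ n
    · have ht : 1 ≤ n / N := by
        have : N ≤ n := hn
        exact Nat.one_le_div_iff hN |>.mpr hn
      have hsub : (n - N) / N = n / N - 1 := by
        obtain ⟨t, rfl⟩ := hd
        have h1 : N * t - N = N * (t - 1) := by
          rcases t with _ | t
          · simp
          · simp [Nat.mul_succ]
        rw [h1, Nat.mul_div_cancel_left _ hN, Nat.mul_div_cancel_left _ hN]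
      set t := n / N with hdef
      have harith : t - 1 + (s + 1) = t + s := by omega
      have hpascal : (t + s + 1).choose (s + 1) = (t + s).choose s + (t + s).choose (s + 1) :=
        Nat.choose_succ_succ _ _
      simp only [hd, if_true, hn, hiff.mpr hd, hsub, harith]
      have : t + (s + 1) = t + s + 1 := by omega
      rw [this, hpascal]
      push_cast
      ring
    · simp only [hd, if_false, hn, if_true]
      rw [if_neg (fun h => hd (hiff.mp h))]
      ring
  · have hn' : n < N := by omega
    by_cases h0 : n = 0
    · subst h0
      simp [Nat.zero_div, hn]
    · have : ¬ N ∣ n := fun h => h0 (Nat.eq_zero_of_dvd_of_lt h hn')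
      simp [this, hn]

open Polynomial Finset in
private lemma qp_inv (N : ℕ) (hN : 0 < N) (s : ℕ) :
    (1 - (PowerSeries.X : PowerSeries ℤ) ^ N) ^ (s + 1) *
      PowerSeries.mk (fun n => if N ∣ n then ((n / N + s).choose s : ℤ) else 0) = 1 := by
  induction s with
  | zero =>
      rw [pow_one]
      ext n
      rw [qp_coeff_one_sub_pow_mul]
      simp only [PowerSeries.coeff_mk, Nat.choose_zero_right, Nat.cast_one,
        PowerSeries.coeff_one]
      by_cases hn : N ≤ n
      · have hiff : N ∣ n - N ↔ N ∣ n := by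
          constructor
          · intro h
            have := Nat.sub_add_cancel hn
            exact this ▸ dvd_add h dvd_rfl
          · intro h; exact Nat.dvd_sub h dvd_rfl
        have hne : n ≠ 0 := by omega
        by_cases hd : N ∣ n
        · simp [hd, hiff.mpr hd, hn, hne]
        · rw [if_neg hd, if_pos hn, if_neg (fun h => hd (hiff.mp h))]
          simp [hne]
      · have hn' : n < N := by omega
        by_cases h0 : n = 0
        · subst h0; simp [hn]
        · have : ¬ N ∣ n := fun h => h0 (Nat.eq_zero_of_dvd_of_lt h hn')
          simp [this, hn, h0]
  | succ s ih =>
      have : (1 - (PowerSeries.X : PowerSeries ℤ) ^ N) ^ (s + 1 + 1) = 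
          (1 - (PowerSeries.X : PowerSeries ℤ) ^ N) ^ (s + 1) *
          (1 - (PowerSeries.X : PowerSeries ℤ) ^ N) := by ring
      rw [this, mul_assoc, qp_step N hN s, ih]

private lemma qp_prod_asc (t : ℕ) : ∀ s : ℕ,
    ∏ j ∈ Finset.range s, (t + 1 + j) = (t + 1).ascFactorial s := by
  intro s
  induction s with
  | zero => simp
  | succ s ih =>
      rw [Finset.prod_range_succ, ih, Nat.ascFactorial_succ, mul_comm]

theorem eventually_quasiPolynomial_of_rational_generating_function
    (k : ℕ) (hk : 0 < k) (a : ℕ → ℤ) (m : Fin k → ℕ) (hm : ∀ i, 0 < m i)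
    (P : Polynomial ℤ)
    (hgen : (PowerSeries.mk a) * ∏ i, (1 - (PowerSeries.X : PowerSeries ℤ) ^ (m i))
              = (P : PowerSeries ℤ))
    (hP1 : P.eval 1 ≠ 0) :
    ∃ N : ℕ, ∃ hN : 0 < N, ∃ q : Fin N → Polynomial ℚ,
      (∀ i, (q i).degree ≤ (k - 1 : ℕ)) ∧
      (∃ i, (q i).degree = (k - 1 : ℕ)) ∧
      ∀ᶠ n in atTop, (a n : ℚ) = (q ⟨n % N, Nat.mod_lt n hN⟩).eval (n : ℚ) := by
  obtain ⟨s, rfl⟩ : ∃ s, k = s + 1 := ⟨k - 1, (Nat.succ_pred_eq_of_pos hk).symm⟩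
  have hks : (s + 1 - 1 : ℕ) = s := by omega
  rw [hks]
  classical
  set N : ℕ := ∏ i, m i with hNdef
  have hN : 0 < N := Finset.prod_pos (fun i _ => hm i)
  have hdvd : ∀ i, m i ∣ N := fun i => Finset.dvd_prod_of_mem m (Finset.mem_univ i)
  set c : Fin (s + 1) → ℕ := fun i => N / m i with hcdef
  have hc : ∀ i, m i * c i = N := fun i => Nat.mul_div_cancel' (hdvd i) 
  have hcpos : ∀ i, 0 < c i := by
    intro i
    rcases Nat.eq_zero_or_pos (c i) with h | h
    · exfalso; have := hc i; rw [h, mul_zero] at this; omega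
    · exact h
  -- geometric factorization in Polynomial ℤ
  set G : Polynomial ℤ := ∏ i, ∑ j ∈ Finset.range (c i), Polynomial.X ^ (m i * j) with hGdef
  have hfac : ∀ i : Fin (s + 1),
      (1 - Polynomial.X ^ (m i)) * (∑ j ∈ Finset.range (c i), (Polynomial.X : Polynomial ℤ) ^ (m i * j))
        = 1 - Polynomial.X ^ N := by
    intro i
    have hg := geom_sum_mul ((Polynomial.X : Polynomial ℤ) ^ (m i)) (c i)
    have h1 : ∀ j, ((Polynomial.X : Polynomial ℤ) ^ (m i)) ^ j = Polynomial.X ^ (m i * j) := by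
      intro j; rw [← pow_mul]
    calc (1 - Polynomial.X ^ (m i)) * (∑ j ∈ Finset.range (c i), (Polynomial.X : Polynomial ℤ) ^ (m i * j))
        = -((∑ j ∈ Finset.range (c i), ((Polynomial.X : Polynomial ℤ) ^ (m i)) ^ j) *
            ((Polynomial.X : Polynomial ℤ) ^ (m i) - 1)) := by
          simp_rw [h1]; ring
      _ = -(((Polynomial.X : Polynomial ℤ) ^ (m i)) ^ (c i) - 1) := by rw [hg]
      _ = 1 - Polynomial.X ^ N := by rw [← pow_mul, hc i]; ring
  have hGfull : (∏ i, (1 - (Polynomial.X : Polynomial ℤ) ^ (m i))) * G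
      = (1 - Polynomial.X ^ N) ^ (s + 1) := by
    rw [hGdef, ← Finset.prod_mul_distrib]
    rw [Finset.prod_congr rfl (fun i _ => hfac i)]
    simp [Finset.prod_const]
  have hG1 : G.eval 1 = ∏ i, (c i : ℤ) := by
    rw [hGdef, Polynomial.eval_prod]
    refine Finset.prod_congr rfl (fun i _ => ?_)
    rw [Polynomial.eval_finset_sum]
    simp
  have hG1ne : G.eval 1 ≠ 0 := by
    rw [hG1]
    exact ne_of_gt (Finset.prod_pos (fun i _ => by exact_mod_cast hcpos i))
  set Q : Polynomial ℤ := P * G with hQdef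
  have hQ1 : Q.eval 1 ≠ 0 := by
    rw [hQdef, Polynomial.eval_mul]
    exact mul_ne_zero hP1 hG1ne
  -- power series identity
  have hcast : (∏ i, (1 - (PowerSeries.X : PowerSeries ℤ) ^ (m i))) * (G : PowerSeries ℤ)
      = (1 - (PowerSeries.X : PowerSeries ℤ) ^ N) ^ (s + 1) := by
    have := congrArg (Polynomial.coeToPowerSeries.ringHom (R := ℤ)) hGfull
    simpa only [map_mul, map_prod, map_sub, map_pow, map_one,
      Polynomial.coeToPowerSeries.ringHom_apply, Polynomial.coe_X] using this
  have hQps : PowerSeries.mk a * (1 - (PowerSeries.X : PowerSeries ℤ) ^ N) ^ (s + 1)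
      = (Q : PowerSeries ℤ) := by
    rw [← hcast, ← mul_assoc, hgen, hQdef, Polynomial.coe_mul]
  set b : ℕ → ℤ := fun n => if N ∣ n then ((n / N + s).choose s : ℤ) else 0 with hbdef
  have hmk : PowerSeries.mk a = (Q : PowerSeries ℤ) * PowerSeries.mk b := by
    calc PowerSeries.mk a
        = PowerSeries.mk a * ((1 - (PowerSeries.X : PowerSeries ℤ) ^ N) ^ (s + 1)
            * PowerSeries.mk b) := by rw [qp_inv N hN s, mul_one]
      _ = (PowerSeries.mk a * (1 - (PowerSeries.X : PowerSeries ℤ) ^ N) ^ (s + 1))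
            * PowerSeries.mk b := by ring
      _ = (Q : PowerSeries ℤ) * PowerSeries.mk b := by rw [hQps]
  have hcoeff : ∀ n, a n = ∑ d ∈ Finset.range (n + 1), Q.coeff d * b (n - d) := by
    intro n
    have h1 := congrArg (PowerSeries.coeff n) hmk
    rw [PowerSeries.coeff_mk, PowerSeries.coeff_mul] at h1
    rw [h1, Finset.Nat.sum_antidiagonal_eq_sum_range_succ
      (fun i j => PowerSeries.coeff i (Q : PowerSeries ℤ) * PowerSeries.coeff j (PowerSeries.mk b))]
    refine Finset.sum_congr rfl (fun d _ => ?_)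
    rw [Polynomial.coeff_coe, PowerSeries.coeff_mk]
  set D : ℕ := Q.natDegree with hDdef
  have hcoeff' : ∀ n, D ≤ n → a n = ∑ d ∈ Finset.range (D + 1), Q.coeff d * b (n - d) := by
    intro n hn
    rw [hcoeff n]
    symm
    apply Finset.sum_subset
    · exact Finset.range_subset_range.mpr (by omega)
    · intro x hx hnx
      simp only [Finset.mem_range] at hx hnx
      rw [Polynomial.coeff_eq_zero_of_natDegree_lt (by omega), zero_mul]
  -- the quasi-polynomials
  set pol : ℕ → Polynomial ℚ := fun d =>
    Polynomial.C ((Nat.factorial s : ℚ))⁻¹ * ∏ j ∈ Finset.range s,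
      (Polynomial.C ((N : ℚ))⁻¹ * Polynomial.X
        + Polynomial.C ((j : ℚ) + 1 - (d : ℚ) / (N : ℚ))) with hpoldef
  have hNQne : (N : ℚ) ≠ 0 := Nat.cast_ne_zero.mpr (by omega)
  have hsfne : (Nat.factorial s : ℚ) ≠ 0 := Nat.cast_ne_zero.mpr (Nat.factorial_ne_zero s)
  have hlinu : ∀ (u : ℚ), (Polynomial.C ((N : ℚ))⁻¹ * Polynomial.X + Polynomial.C u).degree = 1 :=
    fun u => Polynomial.degree_linear (inv_ne_zero hNQne)
  have hpol_deg : ∀ d, (pol d).degree ≤ (s : ℕ) := by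
    intro d
    rw [hpoldef]
    calc (Polynomial.C ((Nat.factorial s : ℚ))⁻¹ * _).degree
        ≤ (Polynomial.C ((Nat.factorial s : ℚ))⁻¹).degree + (∏ j ∈ Finset.range s,
            (Polynomial.C ((N : ℚ))⁻¹ * Polynomial.X
              + Polynomial.C ((j : ℚ) + 1 - (d : ℚ) / (N : ℚ)))).degree := Polynomial.degree_mul_le _ _
      _ ≤ 0 + (s : ℕ) := by
          apply add_le_add (Polynomial.degree_C_le)
          rw [Polynomial.degree_prod]
          rw [Finset.sum_congr rfl (fun j _ => hlinu _)]
          simp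
      _ = (s : ℕ) := by simp
  have hpol_coeff : ∀ d, (pol d).coeff s = ((Nat.factorial s : ℚ))⁻¹ * ((N : ℚ))⁻¹ ^ s := by
    intro d
    rw [hpoldef]
    rw [Polynomial.coeff_C_mul]
    congr 1
    have hnd : (∏ j ∈ Finset.range s, (Polynomial.C ((N : ℚ))⁻¹ * Polynomial.X
        + Polynomial.C ((j : ℚ) + 1 - (d : ℚ) / (N : ℚ)))).natDegree = s := by
      rw [Polynomial.natDegree_prod]
      · rw [Finset.sum_congr rfl (fun j _ => Polynomial.natDegree_linear (inv_ne_zero hNQne))]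
        simp
      · intro j _
        intro h
        have h2 := hlinu ((j : ℚ) + 1 - (d : ℚ) / (N : ℚ))
        rw [h] at h2
        simp at h2
    have hstep : (∏ j ∈ Finset.range s, (Polynomial.C ((N : ℚ))⁻¹ * Polynomial.X
        + Polynomial.C ((j : ℚ) + 1 - (d : ℚ) / (N : ℚ)))).coeff s
        = (∏ j ∈ Finset.range s, (Polynomial.C ((N : ℚ))⁻¹ * Polynomial.X
        + Polynomial.C ((j : ℚ) + 1 - (d : ℚ) / (N : ℚ)))).leadingCoeff := by
      rw [Polynomial.leadingCoeff, hnd]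
    rw [hstep, Polynomial.leadingCoeff_prod]
    rw [Finset.prod_congr rfl
      (fun j _ => Polynomial.leadingCoeff_linear (inv_ne_zero hNQne))]
    simp
  have hpol_eval : ∀ d n : ℕ, d ≤ n → N ∣ (n - d) →
      (pol d).eval (n : ℚ) = (((n - d) / N + s).choose s : ℚ) := by
    intro d n hdn hNd
    set t : ℕ := (n - d) / N with htdef
    have htN : N * t = n - d := Nat.mul_div_cancel' hNd
    have hq : (n : ℚ) = (N : ℚ) * (t : ℚ) + (d : ℚ) := by
      have : (N * t + d : ℕ) = n := by omega
      exact_mod_cast (congrArg (fun x : ℕ => (x : ℚ)) this).symm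
    rw [hpoldef]
    simp only [Polynomial.eval_prod, Polynomial.eval_add,
      Polynomial.eval_mul, Polynomial.eval_C, Polynomial.eval_X]
    have hfactor : ∀ j ∈ Finset.range s,
        ((N : ℚ))⁻¹ * (n : ℚ) + ((j : ℚ) + 1 - (d : ℚ) / (N : ℚ)) = (t : ℚ) + 1 + (j : ℚ) := by
      intro j _
      rw [hq]
      field_simp
      ring
    rw [Finset.prod_congr rfl hfactor]
    have hprod : (∏ j ∈ Finset.range s, ((t : ℚ) + 1 + (j : ℚ)))
        = ((∏ j ∈ Finset.range s, (t + 1 + j) : ℕ) : ℚ) := by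
      push_cast
      rfl
    rw [hprod, qp_prod_asc, Nat.ascFactorial_eq_factorial_mul_choose]
    push_cast
    field_simp
  set g : ℕ → Fin N := fun d => ⟨d % N, Nat.mod_lt d hN⟩ with hgdef
  set q : Fin N → Polynomial ℚ := fun r =>
    ∑ d ∈ (Finset.range (D + 1)).filter (fun d => g d = r),
      Polynomial.C ((Q.coeff d : ℚ)) * pol d with hqdef
  have hq_deg : ∀ r, (q r).degree ≤ (s : ℕ) := by
    intro r
    rw [hqdef]
    refine (Polynomial.degree_sum_le _ _).trans ?_
    apply Finset.sup_le
    intro d _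
    calc (Polynomial.C ((Q.coeff d : ℚ)) * pol d).degree
        ≤ (Polynomial.C ((Q.coeff d : ℚ))).degree + (pol d).degree := Polynomial.degree_mul_le _ _
      _ ≤ 0 + (s : ℕ) := add_le_add Polynomial.degree_C_le (hpol_deg d)
      _ = (s : ℕ) := by simp
  set L : ℚ := ((Nat.factorial s : ℚ))⁻¹ * ((N : ℚ))⁻¹ ^ s with hLdef
  have hLne : L ≠ 0 := mul_ne_zero (inv_ne_zero hsfne) (pow_ne_zero _ (inv_ne_zero hNQne))
  have hq_coeff : ∀ r, (q r).coeff s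
      = L * ((∑ d ∈ (Finset.range (D + 1)).filter (fun d => g d = r), Q.coeff d : ℤ) : ℚ) := by
    intro r
    rw [hqdef]
    rw [Polynomial.finset_sum_coeff]
    push_cast
    rw [Finset.mul_sum]
    refine Finset.sum_congr rfl (fun d _ => ?_)
    rw [Polynomial.coeff_C_mul, hpol_coeff d]
    ring
  have hsum_fibers : ∑ r : Fin N, (∑ d ∈ (Finset.range (D + 1)).filter (fun d => g d = r), Q.coeff d)
      = Q.eval 1 := by
    rw [Finset.sum_fiberwise_of_maps_to (fun d _ => Finset.mem_univ (g d))]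
    rw [Polynomial.eval_eq_sum_range]
    simp [hDdef]
  have hexists : ∃ r : Fin N, (∑ d ∈ (Finset.range (D + 1)).filter (fun d => g d = r), Q.coeff d) ≠ 0 := by
    by_contra h
    push_neg at h
    apply hQ1
    rw [← hsum_fibers]
    exact Finset.sum_eq_zero (fun r _ => h r)
  obtain ⟨r0, hr0⟩ := hexists
  refine ⟨N, hN, q, hq_deg, ⟨r0, ?_⟩, ?_⟩
  · apply Polynomial.degree_eq_of_le_of_coeff_ne_zero (hq_deg r0)
    rw [hq_coeff r0]
    exact mul_ne_zero hLne (by exact_mod_cast hr0)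
  · rw [eventually_atTop]
    refine ⟨D, fun n hn => ?_⟩
    have hr : (⟨n % N, Nat.mod_lt n hN⟩ : Fin N) = g n := rfl
    rw [hr, hcoeff' n hn]
    push_cast
    rw [hqdef]
    simp only [Polynomial.eval_finset_sum, Polynomial.eval_mul, Polynomial.eval_C]
    rw [Finset.sum_filter]
    refine Finset.sum_congr rfl (fun d hd => ?_)
    have hdn : d ≤ n := by
      simp only [Finset.mem_range] at hd; omega
    by_cases hgd : g d = g n
    · have hmod : d % N = n % N := by
        have := congrArg Fin.val hgd
        simpa using this
      have hdvdnd : N ∣ n - d := by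
        have := Nat.sub_mod_eq_zero_of_mod_eq hmod.symm
        exact Nat.dvd_of_mod_eq_zero this
      rw [if_pos hgd, hpol_eval d n hdn hdvdnd, hbdef]
      simp [hdvdnd]
    · have hnd : ¬ N ∣ n - d := by
        intro hdvdnd
        apply hgd
        obtain ⟨u, hu⟩ := hdvdnd
        have h1 : n % N = d % N := by
          have hn' : n = N * u + d := by omega
          rw [hn', Nat.mul_add_mod]
        rw [hgdef]
        exact Fin.ext h1.symm
      rw [if_neg hgd, hbdef]
      simp [hnd]
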